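/- Let I = [a,b] (a < b) be a compact interval, f : I → ℝ a continuous function, and G = {(x, f(x)) : x ∈ I} ⊆ ℝ² its graph. Then G is a self-similar set if and only if G is a straight line segment, i.e., G equals the segment joining (a, f(a)) and (b, f(b)). -/

import Mathlib

/-- The rotation of ℝ² by angle θ, given by the matrix ((cos θ, sin θ), (−sin θ, cos θ)). -/
noncomputable def rot (θ : ℝ) (v : ℝ × ℝ) : ℝ × ℝ :=
  (v.1 * Real.cos θ + v.2 * Real.sin θ, -v.1 * Real.sin θ + v.2 * Real.cos θ)

/-- A (contracting) similitude of ℝ²: a map `S v = r • ρ_θ v + b` with `r ∈ (0,1)`. -/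
def IsSimilitude (S : ℝ × ℝ → ℝ × ℝ) : Prop :=
  ∃ (r θ : ℝ) (b : ℝ × ℝ), r ∈ Set.Ioo (0 : ℝ) 1 ∧ ∀ v, S v = r • rot θ v + b

/-- A compact set `K ⊆ ℝ²` is self-similar if it is the union of its images under
finitely many (at least one) contracting similitudes. -/
def IsSelfSimilar (K : Set (ℝ × ℝ)) : Prop :=
  IsCompact K ∧ ∃ (k : ℕ) (S : Fin k → ℝ × ℝ → ℝ × ℝ),
    0 < k ∧ (∀ i, IsSimilitude (S i)) ∧ K = ⋃ i, S i '' K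

open Set Filter Topology

/-- The set of slopes of chords of the graph of `f` over `[a,b]`. -/
def slopeSet (a b : ℝ) (f : ℝ → ℝ) : Set ℝ :=
  {q | ∃ x y, x ∈ Set.Icc a b ∧ y ∈ Set.Icc a b ∧ x < y ∧ q = (f y - f x) / (y - x)}

lemma slopeSet_nonempty (a b : ℝ) (hab : a < b) (f : ℝ → ℝ) :
    ((f b - f a) / (b - a)) ∈ slopeSet a b f :=
  ⟨a, b, ⟨le_refl a, hab.le⟩, ⟨hab.le, le_refl b⟩, hab, rfl⟩

lemma slopeSet_preconnected (a b : ℝ) (f : ℝ → ℝ) (hf : ContinuousOn f (Set.Icc a b)) :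
    IsPreconnected (slopeSet a b f) := by
  have hset : slopeSet a b f =
      (fun p : ℝ × ℝ => (f p.2 - f p.1) / (p.2 - p.1)) ''
        ((Set.Icc a b ×ˢ Set.Icc a b) ∩ {p : ℝ × ℝ | p.1 < p.2}) := by
    ext q
    constructor
    · rintro ⟨x, y, hx, hy, hxy, rfl⟩
      exact ⟨(x, y), ⟨⟨hx, hy⟩, hxy⟩, rfl⟩
    · rintro ⟨⟨x, y⟩, ⟨⟨hx, hy⟩, hxy⟩, rfl⟩
      exact ⟨x, y, hx, hy, hxy, rfl⟩
  rw [hset]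
  have hconv : Convex ℝ ((Set.Icc a b ×ˢ Set.Icc a b) ∩ {p : ℝ × ℝ | p.1 < p.2}) := by
    apply Convex.inter ((convex_Icc a b).prod (convex_Icc a b))
    have hlin : IsLinearMap ℝ (fun p : ℝ × ℝ => p.2 - p.1) := by
      constructor
      · intro p q; simp; ring
      · intro c p; simp [Prod.smul_fst, Prod.smul_snd]; ring
    have : Convex ℝ {w : ℝ × ℝ | 0 < w.2 - w.1} := convex_halfSpace_gt hlin 0
    convert this using 1
    ext p
    simp [sub_pos]
  apply hconv.isPreconnected.image
  apply ContinuousOn.div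
  · exact ContinuousOn.sub
      (hf.comp continuous_snd.continuousOn (fun p hp => hp.1.2))
      (hf.comp continuous_fst.continuousOn (fun p hp => hp.1.1))
  · exact (continuous_snd.sub continuous_fst).continuousOn
  · rintro ⟨x, y⟩ ⟨-, hxy⟩
    exact sub_ne_zero.2 (ne_of_gt hxy)

lemma mobius_aux (J : Set ℝ) (hne : J.Nonempty) (c σ : ℝ) (hσ : σ ≠ 0)
    (hden : ∀ s ∈ J, c + s * σ ≠ 0)
    (hmap : ∀ s ∈ J, (s * c - σ) / (c + s * σ) ∈ J)
    (hpos : ∀ s ∈ J, s < (s * c - σ) / (c + s * σ)) : False := by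
  obtain ⟨s0, hs0⟩ := hne
  set T : ℝ → ℝ := fun s => (s * c - σ) / (c + s * σ) with hT
  set u : ℕ → ℝ := fun n => T^[n] s0 with hu
  have hmem : ∀ n, u n ∈ J := by
    intro n
    induction n with
    | zero => simpa [hu] using hs0
    | succ n ih =>
      have : u (n + 1) = T (u n) := by rw [hu]; simp [Function.iterate_succ_apply']
      rw [this]; exact hmap _ ih
  have hsucc : ∀ n, u (n + 1) = T (u n) := by
    intro n; rw [hu]; simp [Function.iterate_succ_apply']
  have hid : ∀ n, u (n + 1) * (c + u n * σ) = u n * c - σ := by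
    intro n
    rw [hsucc n, hT]
    exact div_mul_cancel₀ _ (hden _ (hmem n))
  have hmono : Monotone u := by
    apply monotone_nat_of_le_succ
    intro n
    rw [hsucc n]
    exact (hpos _ (hmem n)).le
  by_cases hb : BddAbove (Set.range u)
  · have hlim : Tendsto u atTop (𝓝 (⨆ n, u n)) := tendsto_atTop_ciSup hmono hb
    set L := ⨆ n, u n with hL
    have h1 : Tendsto (fun n => u (n + 1)) atTop (𝓝 L) :=
      hlim.comp (tendsto_add_atTop_nat 1)
    have h2 : Tendsto (fun n => u (n + 1) * (c + u n * σ)) atTop (𝓝 (L * (c + L * σ))) :=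
      h1.mul (tendsto_const_nhds.add (hlim.mul tendsto_const_nhds))
    have h3 : Tendsto (fun n => u n * c - σ) atTop (𝓝 (L * c - σ)) :=
      (hlim.mul tendsto_const_nhds).sub tendsto_const_nhds
    have h4 : Tendsto (fun n => u (n + 1) * (c + u n * σ)) atTop (𝓝 (L * c - σ)) :=
      h3.congr (fun n => (hid n).symm)
    have h5 : L * (c + L * σ) = L * c - σ := tendsto_nhds_unique h2 h4
    have : σ * (L ^ 2 + 1) = 0 := by ring_nf; nlinarith [h5]
    have hL2 : L ^ 2 + 1 > 0 := by positivity
    exact hσ (by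
      rcases mul_eq_zero.1 this with h | h
      · exact h
      · linarith)
  · have hdiv : Tendsto u atTop atTop := tendsto_atTop_atTop_of_monotone' hmono hb
    have hne0 : ∀ᶠ n in atTop, (0:ℝ) < u n := hdiv.eventually_gt_atTop 0
    have hinv : Tendsto (fun n => (u n)⁻¹) atTop (𝓝 0) := hdiv.inv_tendsto_atTop
    have heq : ∀ᶠ n in atTop, (c - σ * (u n)⁻¹) / (c * (u n)⁻¹ + σ) = u (n + 1) := by
      filter_upwards [hne0] with n hn
      have hun : u n ≠ 0 := ne_of_gt hn
      have hd1 : c + u n * σ ≠ 0 := hden _ (hmem n)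
      have hd2 : c * (u n)⁻¹ + σ ≠ 0 := by
        have : c * (u n)⁻¹ + σ = (c + u n * σ) * (u n)⁻¹ := by
          field_simp
        rw [this]
        exact mul_ne_zero hd1 (inv_ne_zero hun)
      rw [hsucc n, hT]
      rw [div_eq_div_iff hd2 hd1]
      field_simp
    have h4 : Tendsto (fun n => (c - σ * (u n)⁻¹) / (c * (u n)⁻¹ + σ)) atTop
        (𝓝 ((c - σ * 0) / (c * 0 + σ))) := by
      apply Tendsto.div
      · exact tendsto_const_nhds.sub (tendsto_const_nhds.mul hinv)
      · exact (tendsto_const_nhds.mul hinv).add tendsto_const_nhds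
      · simpa using hσ
    have h5 : Tendsto (fun n => u (n + 1)) atTop (𝓝 ((c - σ * 0) / (c * 0 + σ))) :=
      h4.congr' heq
    have h6 : Tendsto (fun n => u (n + 1)) atTop atTop :=
      hdiv.comp (tendsto_add_atTop_nat 1)
    exact not_tendsto_atTop_of_tendsto_nhds h5 h6

lemma sigma_eq_zero (J : Set ℝ) (hne : J.Nonempty) (hconn : IsPreconnected J) (c σ : ℝ)
    (hden : ∀ s ∈ J, c + s * σ ≠ 0)
    (hmap : ∀ s ∈ J, (s * c - σ) / (c + s * σ) ∈ J) : σ = 0 := by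
  by_contra hσ
  set T : ℝ → ℝ := fun s => (s * c - σ) / (c + s * σ) with hT
  have hTcont : ContinuousOn (fun s => T s - s) J := by
    apply ContinuousOn.sub _ continuousOn_id
    apply ContinuousOn.div
    · exact ((continuous_id.mul continuous_const).sub continuous_const).continuousOn
    · exact (continuous_const.add (continuous_id.mul continuous_const)).continuousOn
    · exact hden
  have hU0 : (0:ℝ) ∉ (fun s => T s - s) '' J := by
    rintro ⟨s, hs, h⟩
    have hd := hden s hs
    have h1 : T s = s := by linarith [sub_eq_zero.1 h]
    rw [hT] at h1
    have h2 : s * c - σ = s * (c + s * σ) := by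
      field_simp at h1
      linarith [h1]
    have h3 : σ * (s ^ 2 + 1) = 0 := by nlinarith [h2]
    have : s ^ 2 + 1 > 0 := by positivity
    rcases mul_eq_zero.1 h3 with h | h
    · exact hσ h
    · linarith
  have hUconn : IsPreconnected ((fun s => T s - s) '' J) := hconn.image _ hTcont
  have hdich : (∀ s ∈ J, 0 < T s - s) ∨ (∀ s ∈ J, T s - s < 0) := by
    by_contra h
    push_neg at h
    obtain ⟨⟨s1, hs1, h1⟩, s2, hs2, h2⟩ := h
    have h1' : T s1 - s1 < 0 := lt_of_le_of_ne h1 (fun he => hU0 ⟨s1, hs1, he⟩)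
    have h2' : 0 < T s2 - s2 := lt_of_le_of_ne h2 (fun he => hU0 ⟨s2, hs2, he.symm⟩)
    have : (0:ℝ) ∈ (fun s => T s - s) '' J := by
      have := hUconn.ordConnected
      exact this.out ⟨s1, hs1, rfl⟩ ⟨s2, hs2, rfl⟩ ⟨h1'.le, h2'.le⟩
    exact hU0 this
  rcases hdich with hpos | hneg
  · exact mobius_aux J hne c σ hσ hden hmap (fun s hs => by
      have := hpos s hs; simp only [hT] at this ⊢; linarith)
  · apply mobius_aux (Neg.neg '' J) (hne.image _) c (-σ) (neg_ne_zero.2 hσ)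
    · rintro s' ⟨s, hs, rfl⟩
      have : c + -s * -σ = c + s * σ := by ring
      rw [this]
      exact hden s hs
    · rintro s' ⟨s, hs, rfl⟩
      refine ⟨T s, hmap s hs, ?_⟩
      have : c + -s * -σ = c + s * σ := by ring
      rw [this]
      have h2 : (-s * c - -σ) / (c + s * σ) = -((s * c - σ) / (c + s * σ)) := by
        rw [← neg_div]; congr 1; ring
      rw [h2]
    · rintro s' ⟨s, hs, rfl⟩
      have h1 := hneg s hs
      have hd := hden s hs
      have : c + -s * -σ = c + s * σ := by ring
      rw [this]
      have h2 : (-s * c - -σ) / (c + s * σ) = -(T s) := by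
        rw [hT, ← neg_div]
        congr 1
        ring
      rw [h2]
      simp only [hT] at h1
      linarith

/-- Greedy-chain covering bound. -/
lemma chain_bound (g : ℝ → ℝ) (C δ y : ℝ) (hC : 0 ≤ C) (hδ : 0 < δ) :
    ∀ (F : Finset (ℝ × ℝ)), ∀ p t : ℝ, p ≤ t → t ≤ y →
      (∀ pr ∈ F, pr.1 ≤ p → p ≤ pr.2 → pr.2 ≤ t) →
      (∀ pr ∈ F, pr.2 - pr.1 ≤ δ) →
      (∀ pr ∈ F, ∀ u v, pr.1 ≤ u → u ≤ v → v ≤ pr.2 → g v - g u ≤ C * (pr.2 - pr.1)) →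
      (∀ s, t < s → s ≤ y → ∃ pr ∈ F, pr.1 ≤ s ∧ s ≤ pr.2) →
      g y - g t ≤ C * (2 * (y - t) + (t - p) + δ) := by
  intro F
  induction F using Finset.strongInduction with
  | _ F IH =>
    intro p t hpt hty hinv hlen hrise hcov
    rcases le_or_gt y t with hyt | hty'
    · have hyt' : y = t := le_antisymm hyt hty
      rw [hyt']
      have h0 : (0:ℝ) ≤ C * (2 * (t - t) + (t - p) + δ) := by
        apply mul_nonneg hC; linarith
      linarith
    · -- find a member containing t and reaching strictly beyond t
      have hex : ∃ pr ∈ F, pr.1 ≤ t ∧ t < pr.2 := by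
        by_contra hcon
        push_neg at hcon
        set A := F.filter (fun pr => t < pr.1) with hA
        rcases A.eq_empty_or_nonempty with hAe | hAne
        · obtain ⟨pr, hprF, h1, h2⟩ := hcov y hty' le_rfl
          rcases le_or_gt pr.1 t with h3 | h3
          · exact absurd (hcon pr hprF h3) (not_le.2 (lt_of_lt_of_le hty' h2))
          · have : pr ∈ A := Finset.mem_filter.2 ⟨hprF, h3⟩
            rw [hAe] at this
            exact absurd this (Finset.notMem_empty pr)
        · set m := A.inf' hAne (fun pr => pr.1) with hm
          have hmt : t < m := by
            rw [hm, Finset.lt_inf'_iff]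
            intro pr hpr
            exact (Finset.mem_filter.1 hpr).2
          set s := min ((t + m) / 2) y with hs
          have hts : t < s := by
            rw [hs]
            apply lt_min _ hty'
            linarith
          have hsy : s ≤ y := min_le_right _ _
          obtain ⟨pr, hprF, h1, h2⟩ := hcov s hts hsy
          rcases le_or_gt pr.1 t with h3 | h3
          · exact absurd (hcon pr hprF h3) (not_le.2 (lt_of_lt_of_le hts h2))
          · have hprA : pr ∈ A := Finset.mem_filter.2 ⟨hprF, h3⟩
            have : m ≤ pr.1 := Finset.inf'_le _ hprA
            have : m ≤ s := le_trans this h1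
            have : s ≤ (t + m) / 2 := min_le_left _ _
            linarith
      set B := F.filter (fun pr => pr.1 ≤ t ∧ t < pr.2) with hB
      have hBne : B.Nonempty := by
        obtain ⟨pr, h1, h2, h3⟩ := hex
        exact ⟨pr, Finset.mem_filter.2 ⟨h1, h2, h3⟩⟩
      obtain ⟨pm, hpmB, hpmax⟩ := B.exists_max_image (fun pr => pr.2) hBne
      have hpmF : pm ∈ F := (Finset.mem_filter.1 hpmB).1
      have hpm1 : pm.1 ≤ t := (Finset.mem_filter.1 hpmB).2.1
      have hpm2 : t < pm.2 := (Finset.mem_filter.1 hpmB).2.2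
      have hpm1p : p < pm.1 := by
        by_contra hcon
        push_neg at hcon
        have := hinv pm hpmF hcon (le_trans hpt hpm2.le)
        linarith
      rcases le_or_gt y pm.2 with hyp2 | hyp2
      · have h1 : g y - g t ≤ C * (pm.2 - pm.1) := hrise pm hpmF t y hpm1 hty hyp2
        have h2 : pm.2 - pm.1 ≤ δ := hlen pm hpmF
        have h3 : C * (pm.2 - pm.1) ≤ C * δ := by
          apply mul_le_mul_of_nonneg_left h2 hC
        have h4 : 0 ≤ 2 * (y - t) + (t - p) := by linarith
        nlinarith
      · -- recurse
        have hsub : F.erase pm ⊂ F := Finset.erase_ssubset hpmF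
        have hIH := IH (F.erase pm) hsub t pm.2 hpm2.le hyp2.le
          (by
            intro pr hpr h1 h2
            have hprF := Finset.mem_of_mem_erase hpr
            rcases eq_or_lt_of_le h2 with he | hlt
            · rw [← he]; exact hpm2.le
            · have : pr ∈ B := Finset.mem_filter.2 ⟨hprF, h1, hlt⟩
              exact hpmax pr this)
          (fun pr hpr => hlen pr (Finset.mem_of_mem_erase hpr))
          (fun pr hpr => hrise pr (Finset.mem_of_mem_erase hpr))
          (by
            intro s h1 h2
            obtain ⟨pr, hprF, h3, h4⟩ := hcov s (lt_trans hpm2 h1) h2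
            refine ⟨pr, Finset.mem_erase.2 ⟨?_, hprF⟩, h3, h4⟩
            intro he
            rw [he] at h4
            exact absurd h4 (not_le.2 h1))
        have hstep : g pm.2 - g t ≤ C * ((pm.2 - t) + (t - p)) := by
          have h1 : g pm.2 - g t ≤ C * (pm.2 - pm.1) := hrise pm hpmF t pm.2 hpm1 hpm2.le le_rfl
          have h2 : pm.2 - pm.1 ≤ (pm.2 - t) + (t - p) := by linarith
          exact le_trans h1 (mul_le_mul_of_nonneg_left h2 hC)
        have hring : C * (2 * (y - pm.2) + (pm.2 - t) + δ) + C * ((pm.2 - t) + (t - p))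
            = C * (2 * (y - t) + (t - p) + δ) := by ring
        linarith [hIH, hstep]

noncomputable def famStep (k : ℕ) (ρ β : Fin k → ℝ) (p : ℝ × ℝ) : Finset (ℝ × ℝ) :=
  Finset.image (fun i =>
    (min (ρ i * p.1 + β i) (ρ i * p.2 + β i), max (ρ i * p.1 + β i) (ρ i * p.2 + β i)))
    Finset.univ

noncomputable def fam (k : ℕ) (ρ β : Fin k → ℝ) (a b : ℝ) : ℕ → Finset (ℝ × ℝ)
  | 0 => {(a, b)}
  | n + 1 => (fam k ρ β a b n).biUnion (famStep k ρ β)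

set_option maxHeartbeats 2000000 in
lemma half_abstract (a b : ℝ) (hab : a < b) (g : ℝ → ℝ) (hg : ContinuousOn g (Set.Icc a b))
    (hga : g a = 0) (hgb : g b = 0)
    (k : ℕ) (hk : 0 < k) (ρ β κ : Fin k → ℝ)
    (hρ0 : ∀ i, ρ i ≠ 0) (hρ1 : ∀ i, |ρ i| < 1)
    (hmaps : ∀ i, ∀ x ∈ Set.Icc a b, ρ i * x + β i ∈ Set.Icc a b)
    (hgeq : ∀ i, ∀ x ∈ Set.Icc a b, g (ρ i * x + β i) = ρ i * g x + κ i)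
    (hcover : ∀ x ∈ Set.Icc a b, ∃ i, ∃ u ∈ Set.Icc a b, ρ i * u + β i = x) :
    ∀ x ∈ Set.Icc a b, ∀ y ∈ Set.Icc a b, x ≤ y → g y ≤ g x := by
  have hba : (0:ℝ) < b - a := sub_pos.2 hab
  haveI : Nonempty (Fin k) := ⟨⟨0, hk⟩⟩
  have huniv : (Finset.univ : Finset (Fin k)).Nonempty := Finset.univ_nonempty
  -- a bound for g
  obtain ⟨M0, hM0⟩ := isCompact_Icc.exists_bound_of_continuousOn hg
  set M : ℝ := max M0 0 with hMdef
  have hM : ∀ x ∈ Set.Icc a b, |g x| ≤ M := fun x hx => le_trans (hM0 x hx) (le_max_left _ _)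
  have hMpos : 0 ≤ M := le_max_right _ _
  set C : ℝ := 2 * M / (b - a) with hCdef
  have hC : 0 ≤ C := by positivity
  have hCb : 2 * M = C * (b - a) := by rw [hCdef]; exact (div_mul_cancel₀ _ hba.ne').symm
  -- min and max contraction ratios
  set ρm : ℝ := Finset.univ.inf' huniv (fun i => |ρ i|) with hρmdef
  have hρm_le : ∀ i, ρm ≤ |ρ i| := fun i => by
    rw [hρmdef]; exact Finset.inf'_le (fun j => |ρ j|) (Finset.mem_univ i)
  have hρm_pos : 0 < ρm := by
    rw [hρmdef, Finset.lt_inf'_iff]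
    exact fun i _ => abs_pos.2 (hρ0 i)
  have hρm_lt1 : ρm < 1 := lt_of_le_of_lt (hρm_le ⟨0, hk⟩) (hρ1 _)
  set R : ℝ := Finset.univ.sup' huniv (fun i => |ρ i|) with hRdef
  have hR_ge : ∀ i, |ρ i| ≤ R := fun i => by
    rw [hRdef]; exact Finset.le_sup' (fun j => |ρ j|) (Finset.mem_univ i)
  have hR_lt1 : R < 1 := by
    rw [hRdef, Finset.sup'_lt_iff]
    exact fun i _ => hρ1 i
  have hR_pos : 0 < R := lt_of_lt_of_le (abs_pos.2 (hρ0 ⟨0, hk⟩)) (hR_ge ⟨0, hk⟩)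
  -- level-n family invariants
  have hFam1 : ∀ n : ℕ, ∀ p ∈ fam k ρ β a b n,
      a ≤ p.1 ∧ p.1 ≤ p.2 ∧ p.2 ≤ b ∧ p.2 - p.1 ≤ R ^ n * (b - a) ∧
      ∀ u v, p.1 ≤ u → u ≤ v → v ≤ p.2 → |g v - g u| ≤ C * (p.2 - p.1) := by
    intro n
    induction n with
    | zero =>
      intro p hp
      simp only [fam, Finset.mem_singleton] at hp
      subst hp
      refine ⟨le_rfl, hab.le, le_rfl, by simp, ?_⟩
      intro u v h1 h2 h3
      have hu : u ∈ Set.Icc a b := ⟨h1, le_trans h2 h3⟩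
      have hv : v ∈ Set.Icc a b := ⟨le_trans h1 h2, h3⟩
      have e1 : |g v - g u| ≤ |g v| + |g u| := abs_sub _ _
      have e2 : |g v| + |g u| ≤ M + M := add_le_add (hM v hv) (hM u hu)
      have e3 : M + M = C * (b - a) := by rw [← hCb]; ring
      linarith
    | succ n IH =>
      intro p hp
      simp only [fam] at hp
      obtain ⟨q, hq, hpq⟩ := Finset.mem_biUnion.1 hp
      simp only [famStep, Finset.mem_image] at hpq
      obtain ⟨i, -, rfl⟩ := hpq
      obtain ⟨hq1, hq12, hq2, hqlen, hqrise⟩ := IH q hq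
      have hq1I : q.1 ∈ Set.Icc a b := ⟨hq1, le_trans hq12 hq2⟩
      have hq2I : q.2 ∈ Set.Icc a b := ⟨le_trans hq1 hq12, hq2⟩
      have hs1 : ρ i * q.1 + β i ∈ Set.Icc a b := hmaps i q.1 hq1I
      have hs2 : ρ i * q.2 + β i ∈ Set.Icc a b := hmaps i q.2 hq2I
      have hdiff : (ρ i * q.2 + β i) - (ρ i * q.1 + β i) = ρ i * (q.2 - q.1) := by ring
      have hlen' : max (ρ i * q.1 + β i) (ρ i * q.2 + β i)
          - min (ρ i * q.1 + β i) (ρ i * q.2 + β i) = |ρ i| * (q.2 - q.1) := by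
        rw [max_sub_min_eq_abs]
        rw [show (ρ i * q.2 + β i) - (ρ i * q.1 + β i) = ρ i * (q.2 - q.1) from by ring]
        rw [abs_mul]
        rw [abs_of_nonneg (by linarith : (0:ℝ) ≤ q.2 - q.1)]
      refine ⟨le_min hs1.1 hs2.1, min_le_max, max_le hs1.2 hs2.2, ?_, ?_⟩
      · simp only []
        rw [hlen', pow_succ]
        have e1 : |ρ i| * (q.2 - q.1) ≤ R * (R ^ n * (b - a)) :=
          mul_le_mul (hR_ge i) hqlen (by linarith) hR_pos.le
        have e2 : R * (R ^ n * (b - a)) = R ^ n * R * (b - a) := by ring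
        linarith
      · intro u v h1 h2 h3
        simp only [] at h1 h3
        -- pull back u and v
        have hmain : ∀ w, min (ρ i * q.1 + β i) (ρ i * q.2 + β i) ≤ w →
            w ≤ max (ρ i * q.1 + β i) (ρ i * q.2 + β i) →
            ∃ w', q.1 ≤ w' ∧ w' ≤ q.2 ∧ ρ i * w' + β i = w := by
          intro w hw1 hw2
          have h0 := hρ0 i
          refine ⟨(w - β i) / ρ i, ?_, ?_, by field_simp; ring⟩
          · rcases lt_or_gt_of_ne h0 with hneg | hpos
            · have hle : ρ i * q.2 + β i ≤ ρ i * q.1 + β i := by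
                have h2 := mul_nonneg (neg_nonneg.2 hneg.le) (sub_nonneg.2 hq12)
                nlinarith
              rw [max_eq_left hle] at hw2
              exact (le_div_iff_of_neg hneg).2 (by linarith)
            · have hle : ρ i * q.1 + β i ≤ ρ i * q.2 + β i := by
                have h2 := mul_le_mul_of_nonneg_left hq12 hpos.le
                linarith
              rw [min_eq_left hle] at hw1
              exact (le_div_iff₀ hpos).2 (by linarith)
          · rcases lt_or_gt_of_ne h0 with hneg | hpos
            · have hle : ρ i * q.2 + β i ≤ ρ i * q.1 + β i := by
                have h2 := mul_nonneg (neg_nonneg.2 hneg.le) (sub_nonneg.2 hq12)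
                nlinarith
              rw [min_eq_right hle] at hw1
              exact (div_le_iff_of_neg hneg).2 (by linarith)
            · have hle : ρ i * q.1 + β i ≤ ρ i * q.2 + β i := by
                have h2 := mul_le_mul_of_nonneg_left hq12 hpos.le
                linarith
              rw [max_eq_right hle] at hw2
              exact (div_le_iff₀ hpos).2 (by linarith)
        obtain ⟨u', hu'1, hu'2, hu'⟩ := hmain u h1 (le_trans h2 h3)
        obtain ⟨v', hv'1, hv'2, hv'⟩ := hmain v (le_trans h1 h2) h3
        have hu'I : u' ∈ Set.Icc a b := ⟨le_trans hq1 hu'1, le_trans hu'2 hq2⟩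
        have hv'I : v' ∈ Set.Icc a b := ⟨le_trans hq1 hv'1, le_trans hv'2 hq2⟩
        have hgu : g u = ρ i * g u' + κ i := by rw [← hu']; exact hgeq i u' hu'I
        have hgv : g v = ρ i * g v' + κ i := by rw [← hv']; exact hgeq i v' hv'I
        have : |g v - g u| = |ρ i| * |g v' - g u'| := by
          rw [hgu, hgv, ← abs_mul]
          congr 1
          ring
        rw [this, hlen']
        rcases le_total u' v' with h | h
        · have e1 : |ρ i| * |g v' - g u'| ≤ |ρ i| * (C * (q.2 - q.1)) :=
            mul_le_mul_of_nonneg_left (hqrise u' v' hu'1 h hv'2) (abs_nonneg _)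
          have e2 : |ρ i| * (C * (q.2 - q.1)) = C * (|ρ i| * (q.2 - q.1)) := by ring
          linarith
        · rw [abs_sub_comm]
          have e1 : |ρ i| * |g u' - g v'| ≤ |ρ i| * (C * (q.2 - q.1)) :=
            mul_le_mul_of_nonneg_left (hqrise v' u' hv'1 h hu'2) (abs_nonneg _)
          have e2 : |ρ i| * (C * (q.2 - q.1)) = C * (|ρ i| * (q.2 - q.1)) := by ring
          linarith
  have hFam2 : ∀ n : ℕ, ∀ x ∈ Set.Icc a b, ∃ p ∈ fam k ρ β a b n, p.1 ≤ x ∧ x ≤ p.2 := by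
    intro n
    induction n with
    | zero =>
      intro x hx
      exact ⟨(a, b), by simp [fam], hx.1, hx.2⟩
    | succ n IH =>
      intro x hx
      obtain ⟨i, u, hu, hψu⟩ := hcover x hx
      obtain ⟨q, hq, hq1, hq2⟩ := IH u hu
      refine ⟨(min (ρ i * q.1 + β i) (ρ i * q.2 + β i),
               max (ρ i * q.1 + β i) (ρ i * q.2 + β i)), ?_, ?_, ?_⟩
      · simp only [fam]
        apply Finset.mem_biUnion.2
        exact ⟨q, hq, by
          simp only [famStep, Finset.mem_image]
          exact ⟨i, Finset.mem_univ i, rfl⟩⟩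
      · simp only []
        rw [← hψu]
        rcases lt_or_gt_of_ne (hρ0 i) with hneg | hpos
        · exact le_trans (min_le_right _ _) (by nlinarith)
        · exact le_trans (min_le_left _ _) (by nlinarith)
      · simp only []
        rw [← hψu]
        rcases lt_or_gt_of_ne (hρ0 i) with hneg | hpos
        · exact le_trans (by nlinarith) (le_max_left _ _)
        · exact le_trans (by nlinarith) (le_max_right _ _)
  -- Lipschitz-type bound via chains of levels-n windows
  have hq2C : ∀ x ∈ Set.Icc a b, ∀ y ∈ Set.Icc a b, x ≤ y → g y - g x ≤ C * 2 * (y - x) := by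
    intro x hx y hy hxy
    have key : ∀ n : ℕ, g y - g x ≤ C * (2 * (y - x) + R ^ n * (b - a) + R ^ n * (b - a)) := by
      intro n
      have hδ : 0 < R ^ n * (b - a) := by positivity
      have hchain := chain_bound g C (R ^ n * (b - a)) y hC hδ (fam k ρ β a b n)
          (x - R ^ n * (b - a)) x (by linarith) hxy
          (by
            intro pr hpr h1 h2
            obtain ⟨_, _, _, hlen, _⟩ := hFam1 n pr hpr
            linarith)
          (fun pr hpr => (hFam1 n pr hpr).2.2.2.1)
          (by
            intro pr hpr u v h1 h2 h3
            have := (hFam1 n pr hpr).2.2.2.2 u v h1 h2 h3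
            exact le_trans (le_abs_self _) this)
          (by
            intro s h1 h2
            have hs : s ∈ Set.Icc a b := ⟨le_trans hx.1 (le_of_lt h1), le_trans h2 hy.2⟩
            exact hFam2 n s hs)
      linarith [hchain]
    have hlim : Filter.Tendsto (fun n : ℕ => C * (2 * (y - x) + R ^ n * (b - a) + R ^ n * (b - a)))
        Filter.atTop (nhds (C * (2 * (y - x) + 0 * (b - a) + 0 * (b - a)))) := by
      apply Filter.Tendsto.const_mul
      have hp : Filter.Tendsto (fun n : ℕ => R ^ n) Filter.atTop (nhds 0) :=
        tendsto_pow_atTop_nhds_zero_of_lt_one hR_pos.le hR_lt1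
      exact (tendsto_const_nhds.add (hp.mul_const _)).add (hp.mul_const _)
    have := ge_of_tendsto' hlim key
    calc g y - g x ≤ C * (2 * (y - x) + 0 * (b - a) + 0 * (b - a)) := this
      _ = C * 2 * (y - x) := by ring
  -- window at a point
  have hW : ∀ z ∈ Set.Icc a b, ∀ ε : ℝ, 0 < ε → ε ≤ b - a →
      ∃ c d, a ≤ c ∧ c ≤ z ∧ z ≤ d ∧ d ≤ b ∧ ρm * ε < d - c ∧ d - c ≤ ε ∧ g c = g d := by
    intro z hz ε hε hεb
    have aux : ∀ n : ℕ, ∀ (φ : ℝ → ℝ) (qq : ℝ), qq ≠ 0 →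
        (∀ x ∈ Set.Icc a b, φ x ∈ Set.Icc a b) →
        (∀ x y : ℝ, φ x - φ y = qq * (x - y)) →
        (∀ x ∈ Set.Icc a b, g (φ x) = qq * g x + g (φ a)) →
        z ∈ φ '' Set.Icc a b → ε < |qq| * (b - a) → |qq| * (b - a) ≤ ε / R ^ n →
        ∃ c d, a ≤ c ∧ c ≤ z ∧ z ≤ d ∧ d ≤ b ∧ ρm * ε < d - c ∧ d - c ≤ ε ∧ g c = g d := by
      intro n
      induction n with
      | zero =>
        intro φ qq hqq hmapsφ hdiffφ hgeqφ hzmem hlow hhigh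
        rw [pow_zero, div_one] at hhigh
        linarith
      | succ n IHn =>
        intro φ qq hqq hmapsφ hdiffφ hgeqφ hzmem hlow hhigh
        obtain ⟨u0, hu0, hphiu⟩ := hzmem
        obtain ⟨i, u1, hu1, hψu⟩ := hcover u0 hu0
        set φ' : ℝ → ℝ := fun x => φ (ρ i * x + β i) with hφ'def
        set qq' : ℝ := qq * ρ i with hqq'def
        have hqq'0 : qq' ≠ 0 := mul_ne_zero hqq (hρ0 i)
        have hmapsφ' : ∀ x ∈ Set.Icc a b, φ' x ∈ Set.Icc a b :=
          fun x hx => hmapsφ _ (hmaps i x hx)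
        have hdiffφ' : ∀ x y : ℝ, φ' x - φ' y = qq' * (x - y) := by
          intro x y
          rw [hφ'def]
          simp only []
          rw [hdiffφ]
          rw [hqq'def]
          ring
        have hga' : g (φ' a) = qq * κ i + g (φ a) := by
          rw [hφ'def]
          simp only []
          rw [hgeqφ _ (hmaps i a ⟨le_rfl, hab.le⟩)]
          rw [hgeq i a ⟨le_rfl, hab.le⟩, hga]
          ring
        have hgeqφ' : ∀ x ∈ Set.Icc a b, g (φ' x) = qq' * g x + g (φ' a) := by
          intro x hx
          rw [hφ'def]
          simp only []
          rw [hgeqφ _ (hmaps i x hx), hgeq i x hx, hga', hqq'def]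
          ring
        have hzmem' : z ∈ φ' '' Set.Icc a b := by
          refine ⟨u1, hu1, ?_⟩
          rw [hφ'def]
          simp only []
          rw [hψu, hphiu]
        have habs : |qq'| = |qq| * |ρ i| := by rw [hqq'def, abs_mul]
        by_cases hcase : |qq'| * (b - a) ≤ ε
        · -- found the window
          have hφ'aI := hmapsφ' a ⟨le_rfl, hab.le⟩
          have hφ'bI := hmapsφ' b ⟨hab.le, le_rfl⟩
          set c : ℝ := min (φ' a) (φ' b) with hcdef
          set d : ℝ := max (φ' a) (φ' b) with hddef
          have hdc : d - c = |qq'| * (b - a) := by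
            rw [hddef, hcdef, max_sub_min_eq_abs]
            rw [show φ' b - φ' a = qq' * (b - a) from hdiffφ' b a]
            rw [abs_mul, abs_of_nonneg hba.le]
          have hbetween : ∀ w ∈ Set.Icc a b, c ≤ φ' w ∧ φ' w ≤ d := by
            intro w hw
            have h1 : φ' w - φ' a = qq' * (w - a) := hdiffφ' w a
            have h2 : φ' b - φ' w = qq' * (b - w) := hdiffφ' b w
            rcases lt_or_gt_of_ne hqq'0 with hneg | hpos
            · have e1 := mul_nonneg (neg_nonneg.2 hneg.le) (sub_nonneg.2 hw.1)
              have e2 := mul_nonneg (neg_nonneg.2 hneg.le) (sub_nonneg.2 hw.2)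
              constructor
              · refine le_trans (min_le_right _ _) ?_
                nlinarith
              · refine le_trans ?_ (le_max_left _ _)
                nlinarith
            · have e1 := mul_nonneg hpos.le (sub_nonneg.2 hw.1)
              have e2 := mul_nonneg hpos.le (sub_nonneg.2 hw.2)
              constructor
              · refine le_trans (min_le_left _ _) ?_
                nlinarith
              · refine le_trans ?_ (le_max_right _ _)
                nlinarith
          have hgab : g (φ' a) = g (φ' b) := by
            rw [hgeqφ' b ⟨hab.le, le_rfl⟩, hgb]
            ring
          have hgcd : g c = g d := by
            rcases le_total (φ' a) (φ' b) with h | h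
            · rw [hcdef, hddef, min_eq_left h, max_eq_right h]
              exact hgab
            · rw [hcdef, hddef, min_eq_right h, max_eq_left h]
              exact hgab.symm
          obtain ⟨u2, hu2, hzeq⟩ := hzmem'
          have hbet := hbetween u2 hu2
          rw [hzeq] at hbet
          refine ⟨c, d, le_min hφ'aI.1 hφ'bI.1, hbet.1, hbet.2, max_le hφ'aI.2 hφ'bI.2, ?_, ?_, hgcd⟩
          · have e1 : ρm * ε < ρm * (|qq| * (b - a)) := mul_lt_mul_of_pos_left hlow hρm_pos
            have e2 : ρm * (|qq| * (b - a)) ≤ |ρ i| * (|qq| * (b - a)) :=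
              mul_le_mul_of_nonneg_right (hρm_le i) (by positivity)
            have e3 : |ρ i| * (|qq| * (b - a)) = |qq| * |ρ i| * (b - a) := by ring
            rw [hdc, habs]
            linarith
          · rw [hdc]
            exact hcase
        · apply IHn φ' qq' hqq'0 hmapsφ' hdiffφ' hgeqφ' hzmem' (not_le.1 hcase)
          rw [habs]
          have h1 : |qq| * |ρ i| * (b - a) = |ρ i| * (|qq| * (b - a)) := by ring
          rw [h1]
          have h2 : |ρ i| * (|qq| * (b - a)) ≤ R * (ε / R ^ (n + 1)) := by
            apply mul_le_mul (hR_ge i) hhigh (by positivity) hR_pos.le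
          have h3 : R * (ε / R ^ (n + 1)) = ε / R ^ n := by
            rw [pow_succ]
            field_simp
          linarith
    rcases eq_or_lt_of_le hεb with heq | hlt
    · refine ⟨a, b, le_rfl, hz.1, hz.2, le_rfl, ?_, by linarith, by rw [hga, hgb]⟩
      have h1 : ρm * ε < 1 * ε := mul_lt_mul_of_pos_right hρm_lt1 hε
      rw [one_mul] at h1
      linarith
    · obtain ⟨n, hn⟩ := exists_pow_lt_of_lt_one (show (0:ℝ) < ε / (b - a) by positivity) hR_lt1
      have hn' : R ^ n * (b - a) < ε := (lt_div_iff₀ hba).1 hn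
      have hbound : |(1:ℝ)| * (b - a) ≤ ε / R ^ n := by
        rw [abs_one, one_mul, le_div_iff₀ (by positivity : (0:ℝ) < R ^ n)]
        have e3 : (b - a) * R ^ n = R ^ n * (b - a) := by ring
        linarith
      exact aux n id 1 one_ne_zero (fun x hx => hx) (fun x y => by simp)
        (fun x hx => by simp [hga]) ⟨z, hz, rfl⟩ (by rw [abs_one, one_mul]; exact hlt) hbound
    -- window inside a pair
  have hW2 : ∀ x ∈ Set.Icc a b, ∀ y ∈ Set.Icc a b, x < y →
      ∃ c d, x ≤ c ∧ c ≤ d ∧ d ≤ y ∧ ρm * (y - x) / 3 < d - c ∧ g c = g d := by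
    intro x hx y hy hxy
    have hz : (x + y) / 2 ∈ Set.Icc a b := ⟨by linarith [hx.1], by linarith [hy.2]⟩
    have hε : (0:ℝ) < (y - x) / 3 := by linarith
    have hεb : (y - x) / 3 ≤ b - a := by linarith [hx.1, hy.2]
    obtain ⟨c, d, hac, hcz, hzd, hdb, hsize1, hsize2, hgcd⟩ := hW _ hz _ hε hεb
    refine ⟨c, d, ?_, le_trans hcz hzd, ?_, ?_, hgcd⟩
    · linarith
    · linarith
    · have : ρm * ((y - x) / 3) = ρm * (y - x) / 3 := by ring
      linarith
  -- the supremum of chord slopes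
  set Qs : Set ℝ :=
    {q | ∃ x y, x ∈ Set.Icc a b ∧ y ∈ Set.Icc a b ∧ x < y ∧ q = (g y - g x) / (y - x)}
    with hQsdef
  have hQne : Qs.Nonempty :=
    ⟨(g b - g a) / (b - a), a, b, ⟨le_rfl, hab.le⟩, ⟨hab.le, le_rfl⟩, hab, rfl⟩
  have hQbdd : BddAbove Qs := by
    refine ⟨2 * C, ?_⟩
    rintro q ⟨x, y, hx, hy, hxy, rfl⟩
    rw [div_le_iff₀ (by linarith)]
    have := hq2C x hx y hy hxy.le
    nlinarith
  set Q : ℝ := sSup Qs with hQdef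
  have hQ0 : Q ≤ 0 := by
    by_contra hQpos
    push_neg at hQpos
    have hfrac : (0:ℝ) < 1 - ρm / 3 := by linarith
    have hfrac1 : 1 - ρm / 3 < 1 := by linarith
    obtain ⟨q0, hq0mem, hq0gt⟩ := exists_lt_of_lt_csSup hQne
      (show (1 - ρm / 3) * Q < Q by nlinarith)
    obtain ⟨x, y, hx, hy, hxy, hq0eq⟩ := hq0mem
    have hL : (0:ℝ) < y - x := by linarith
    have hq0pos : 0 < q0 := lt_of_le_of_lt (by nlinarith) hq0gt
    have hE : 0 < g y - g x := by
      have : q0 * (y - x) = g y - g x := by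
        rw [hq0eq]; field_simp
      nlinarith
    obtain ⟨c, d, hxc, hcd, hdy, hlen, hgcd⟩ := hW2 x hx y hy hxy
    have hcI : c ∈ Set.Icc a b := ⟨le_trans hx.1 hxc, le_trans (le_trans hcd hdy) hy.2⟩
    have hdI : d ∈ Set.Icc a b := ⟨le_trans hcI.1 hcd, le_trans hdy hy.2⟩
    set E1 : ℝ := g c - g x with hE1def
    set E2 : ℝ := g y - g d with hE2def
    have hsum : E1 + E2 = g y - g x := by rw [hE1def, hE2def, hgcd]; ring
    set l1 : ℝ := c - x with hl1def
    set l2 : ℝ := y - d with hl2def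
    have hl1 : 0 ≤ l1 := by rw [hl1def]; linarith
    have hl2 : 0 ≤ l2 := by rw [hl2def]; linarith
    have hl12 : l1 + l2 < (1 - ρm / 3) * (y - x) := by
      rw [hl1def, hl2def]
      nlinarith
    have hl12pos : 0 < l1 + l2 := by
      rcases lt_or_eq_of_le (add_nonneg hl1 hl2) with h | h
      · exact h
      · exfalso
        have h1 : l1 = 0 := by linarith
        have h2 : l2 = 0 := by linarith
        have hc : c = x := by rw [hl1def] at h1; linarith
        have hd : d = y := by rw [hl2def] at h2; linarith
        rw [hc, hd] at hgcd
        have : E1 + E2 = 0 := by rw [hE1def, hE2def, hc, hd]; ring_nf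
        linarith
    -- find a subpair with at least the mediant quality
    have hpair : ∃ u v, u ∈ Set.Icc a b ∧ v ∈ Set.Icc a b ∧ u < v ∧
        (g y - g x) * (v - u) ≤ (g v - g u) * (l1 + l2) := by
      rcases eq_or_lt_of_le hl1 with h1 | h1
      · -- l1 = 0, use (d, y)
        have hc : c = x := by rw [hl1def] at h1; linarith
        have hE1 : E1 = 0 := by rw [hE1def, hc]; ring
        refine ⟨d, y, hdI, hy, by rw [hl2def] at *; linarith, ?_⟩
        have : l1 + l2 = l2 := by rw [← h1]; ring
        rw [this, hl2def]
        have hE2' : g y - g d = g y - g x := by rw [← hsum, hE1]; ring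
        rw [hE2']
      rcases eq_or_lt_of_le hl2 with h2 | h2
      · -- l2 = 0, use (x, c)
        have hd : d = y := by rw [hl2def] at h2; linarith
        have hE2 : E2 = 0 := by rw [hE2def, hd]; ring
        refine ⟨x, c, hx, hcI, by rw [hl1def] at *; linarith, ?_⟩
        have : l1 + l2 = l1 := by rw [← h2]; ring
        rw [this, hl1def]
        have hE1' : g c - g x = g y - g x := by rw [← hsum, hE2]; ring
        rw [hE1']
      -- both positive
      rcases le_or_gt (E1 * (l1 + l2)) ((g y - g x) * l1) with hsplit | hsplit
      · -- then E2 piece is good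
        refine ⟨d, y, hdI, hy, by rw [hl2def] at *; linarith, ?_⟩
        have hE2big : (g y - g x) * l2 ≤ E2 * (l1 + l2) := by nlinarith
        have e1 : y - d = l2 := by rw [hl2def]
        rw [e1]
        rw [hE2def] at hE2big
        linarith
      · refine ⟨x, c, hx, hcI, by rw [hl1def] at *; linarith, ?_⟩
        have e1 : c - x = l1 := by rw [hl1def]
        rw [e1]
        rw [hE1def] at hsplit
        linarith
    obtain ⟨u, v, hu, hv, huv, hratio⟩ := hpair
    have hQmem : (g v - g u) / (v - u) ≤ Q := le_csSup hQbdd ⟨u, v, hu, hv, huv, rfl⟩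
    have hvu : (0:ℝ) < v - u := by linarith
    have hguv : g v - g u ≤ Q * (v - u) := by
      rw [div_le_iff₀ hvu] at hQmem
      linarith
    -- combine everything
    have hEeq : g y - g x = q0 * (y - x) := by rw [hq0eq]; field_simp
    -- (g y - g x) * (v - u) ≤ (g v - g u) * (l1+l2) ≤ Q * (v-u) * (l1+l2)
    have h1 : (g y - g x) * (v - u) ≤ Q * (v - u) * (l1 + l2) := by nlinarith
    have h2 : g y - g x ≤ Q * (l1 + l2) := by
      have := (mul_le_mul_iff_of_pos_right hvu).1 (by nlinarith : (g y - g x) * (v - u) ≤ (Q * (l1 + l2)) * (v - u))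
      exact this
    have h3 : Q * (l1 + l2) < Q * ((1 - ρm / 3) * (y - x)) := by
      exact mul_lt_mul_of_pos_left hl12 hQpos
    have h4 : (1 - ρm / 3) * Q * (y - x) < g y - g x := by
      rw [hEeq]
      nlinarith
    nlinarith
  -- conclusion
  intro x hx y hy hxy
  rcases eq_or_lt_of_le hxy with h | h
  · rw [h]
  · have hmem : (g y - g x) / (y - x) ∈ Qs := ⟨x, y, hx, hy, h, rfl⟩
    have hle : (g y - g x) / (y - x) ≤ Q := le_csSup hQbdd hmem
    have hvu : (0:ℝ) < y - x := by linarith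
    rw [div_le_iff₀ hvu] at hle
    nlinarith

lemma linear_of_selfmaps (a b : ℝ) (hab : a < b) (f : ℝ → ℝ)
    (hf : ContinuousOn f (Set.Icc a b))
    (k : ℕ) (hk : 0 < k) (ρ β γ : Fin k → ℝ)
    (hρ0 : ∀ i, ρ i ≠ 0) (hρ1 : ∀ i, |ρ i| < 1)
    (hmaps : ∀ i, ∀ x ∈ Set.Icc a b, ρ i * x + β i ∈ Set.Icc a b)
    (hfeq : ∀ i, ∀ x ∈ Set.Icc a b, f (ρ i * x + β i) = ρ i * f x + γ i)
    (hcover : ∀ x ∈ Set.Icc a b, ∃ i, ∃ u ∈ Set.Icc a b, ρ i * u + β i = x) :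
    ∀ x ∈ Set.Icc a b, f x = f a + (f b - f a) / (b - a) * (x - a) := by
  have hba : (0:ℝ) < b - a := sub_pos.2 hab
  set s0 : ℝ := (f b - f a) / (b - a) with hs0def
  set g : ℝ → ℝ := fun x => f x - f a - s0 * (x - a) with hgdef
  have hg : ContinuousOn g (Set.Icc a b) := by
    apply ContinuousOn.sub (hf.sub continuousOn_const)
    exact (continuousOn_const.mul (continuousOn_id.sub continuousOn_const))
  have hga : g a = 0 := by simp [hgdef]
  have hgb : g b = 0 := by
    simp only [hgdef, hs0def]
    field_simp
    ring
  have hgeq : ∀ i, ∀ x ∈ Set.Icc a b,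
      g (ρ i * x + β i) = ρ i * g x +
        (γ i - f a + ρ i * f a - s0 * β i + s0 * a - ρ i * s0 * a) := by
    intro i x hx
    simp only [hgdef]
    rw [hfeq i x hx]
    ring
  have hgeq2 : ∀ i, ∀ x ∈ Set.Icc a b,
      (fun x => -(g x)) (ρ i * x + β i) = ρ i * (fun x => -(g x)) x +
        (-(γ i - f a + ρ i * f a - s0 * β i + s0 * a - ρ i * s0 * a)) := by
    intro i x hx
    simp only []
    rw [hgeq i x hx]
    ring
  have h1 := half_abstract a b hab g hg hga hgb k hk ρ β _ hρ0 hρ1 hmaps hgeq hcover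
  have h2 := half_abstract a b hab (fun x => -(g x)) (hg.neg) (by simp [hga]) (by simp [hgb])
    k hk ρ β _ hρ0 hρ1 hmaps hgeq2 hcover
  intro x hx
  have haI : a ∈ Set.Icc a b := ⟨le_rfl, hab.le⟩
  have e1 : g x ≤ g a := h1 a haI x hx hx.1
  have e2 : -(g x) ≤ -(g a) := h2 a haI x hx hx.1
  have e3 : g x = 0 := by rw [hga] at e1; linarith [e1, e2, hga]
  simp only [hgdef] at e3
  linarith

set_option maxHeartbeats 1000000 in
theorem graph_selfSimilar_iff_segment (a b : ℝ) (hab : a < b) (f : ℝ → ℝ)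
    (hf : ContinuousOn f (Set.Icc a b))
    (G : Set (ℝ × ℝ)) (hG : G = (fun x => (x, f x)) '' Set.Icc a b) :
    IsSelfSimilar G ↔ G = segment ℝ ((a, f a) : ℝ × ℝ) ((b, f b) : ℝ × ℝ) := by
  have hba : (0:ℝ) < b - a := sub_pos.2 hab
  have hGmem : ∀ x' y' : ℝ, (x', y') ∈ G ↔ x' ∈ Set.Icc a b ∧ y' = f x' := by
    intro x' y'
    rw [hG]
    constructor
    · rintro ⟨x, hx, heq⟩
      simp only [Prod.mk.injEq] at heq
      obtain ⟨rfl, rfl⟩ := heq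
      exact ⟨hx, rfl⟩
    · rintro ⟨h1, rfl⟩
      exact ⟨x', h1, rfl⟩
  have hGcomp : IsCompact G := by
    rw [hG]
    exact isCompact_Icc.image_of_continuousOn (continuousOn_id.prodMk hf)
  constructor
  · -- hard direction
    rintro ⟨-, k, S, hk, hsim, hun⟩
    have hsub : ∀ i, S i '' G ⊆ G := by
      intro i z hz
      rw [hun]
      exact Set.mem_iUnion.2 ⟨i, hz⟩
    choose r θ bv hr hS using hsim
    have hc1 : ∀ i (v : ℝ × ℝ), (S i v).1
        = r i * (v.1 * Real.cos (θ i) + v.2 * Real.sin (θ i)) + (bv i).1 := by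
      intro i v
      rw [hS i v]
      rfl
    have hc2 : ∀ i (v : ℝ × ℝ), (S i v).2
        = r i * (-v.1 * Real.sin (θ i) + v.2 * Real.cos (θ i)) + (bv i).2 := by
      intro i v
      rw [hS i v]
      rfl
    -- step 1 : all rotations are trivial
    have hsin : ∀ i, Real.sin (θ i) = 0 := by
      intro i
      have htrig : Real.cos (θ i) ^ 2 + Real.sin (θ i) ^ 2 = 1 := by
        rw [add_comm]; exact Real.sin_sq_add_cos_sq (θ i)
      have key : ∀ s ∈ slopeSet a b f,
          (Real.cos (θ i) + s * Real.sin (θ i) ≠ 0) ∧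
          ((s * Real.cos (θ i) - Real.sin (θ i)) /
            (Real.cos (θ i) + s * Real.sin (θ i)) ∈ slopeSet a b f) := by
        rintro s ⟨x, y, hx, hy, hxy, hs⟩
        have hyx : (0:ℝ) < y - x := by linarith
        have hfd : f y - f x = s * (y - x) := by rw [hs]; field_simp
        have hP1 : ((x, f x) : ℝ × ℝ) ∈ G := (hGmem x (f x)).2 ⟨hx, rfl⟩
        have hP2 : ((y, f y) : ℝ × ℝ) ∈ G := (hGmem y (f y)).2 ⟨hy, rfl⟩
        have hQ1 : S i (x, f x) ∈ G := hsub i ⟨_, hP1, rfl⟩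
        have hQ2 : S i (y, f y) ∈ G := hsub i ⟨_, hP2, rfl⟩
        have hd1 : (S i (y, f y)).1 - (S i (x, f x)).1
            = r i * (y - x) * (Real.cos (θ i) + s * Real.sin (θ i)) := by
          rw [hc1 i (y, f y), hc1 i (x, f x)]
          simp only []
          linear_combination (r i * Real.sin (θ i)) * hfd
        have hd2 : (S i (y, f y)).2 - (S i (x, f x)).2
            = r i * (y - x) * (s * Real.cos (θ i) - Real.sin (θ i)) := by
          rw [hc2 i (y, f y), hc2 i (x, f x)]
          simp only []
          linear_combination (r i * Real.cos (θ i)) * hfd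
        have hrne : r i * (y - x) ≠ 0 := by
          have := (hr i).1
          positivity
        have hQ1m : (S i (x, f x)).1 ∈ Set.Icc a b ∧ (S i (x, f x)).2 = f ((S i (x, f x)).1) := by
          have := hQ1
          rw [show S i (x, f x) = ((S i (x, f x)).1, (S i (x, f x)).2) from rfl] at this
          exact (hGmem _ _).1 this
        have hQ2m : (S i (y, f y)).1 ∈ Set.Icc a b ∧ (S i (y, f y)).2 = f ((S i (y, f y)).1) := by
          have := hQ2
          rw [show S i (y, f y) = ((S i (y, f y)).1, (S i (y, f y)).2) from rfl] at this
          exact (hGmem _ _).1 this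
        have hden : Real.cos (θ i) + s * Real.sin (θ i) ≠ 0 := by
          intro hzero
          have he1 : (S i (y, f y)).1 = (S i (x, f x)).1 := by
            have h0 : (S i (y, f y)).1 - (S i (x, f x)).1 = 0 := by rw [hd1, hzero]; ring
            linarith
          have he2 : (S i (y, f y)).2 = (S i (x, f x)).2 := by
            rw [hQ1m.2, hQ2m.2, he1]
          have hnum : s * Real.cos (θ i) - Real.sin (θ i) = 0 := by
            have h0 : r i * (y - x) * (s * Real.cos (θ i) - Real.sin (θ i)) = 0 := by
              rw [← hd2]; linarith
            exact (mul_eq_zero.1 h0).resolve_left hrne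
          have hcontra : (1:ℝ) = 0 := by
            linear_combination (-1 : ℝ) * htrig + Real.cos (θ i) * hzero - Real.sin (θ i) * hnum
          norm_num at hcontra
        refine ⟨hden, ?_⟩
        have hd1ne : (S i (y, f y)).1 - (S i (x, f x)).1 ≠ 0 := by
          rw [hd1]
          exact mul_ne_zero hrne hden
        have hval : ((S i (y, f y)).2 - (S i (x, f x)).2) / ((S i (y, f y)).1 - (S i (x, f x)).1)
            = (s * Real.cos (θ i) - Real.sin (θ i)) / (Real.cos (θ i) + s * Real.sin (θ i)) := by
          rw [hd1, hd2]
          exact mul_div_mul_left _ _ hrne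
        rcases lt_or_gt_of_ne (fun h : (S i (y, f y)).1 = (S i (x, f x)).1 =>
            hd1ne (by rw [h]; ring)) with hlt | hlt
        · refine ⟨(S i (y, f y)).1, (S i (x, f x)).1, hQ2m.1, hQ1m.1, hlt, ?_⟩
          rw [← hQ1m.2, ← hQ2m.2, ← hval]
          rw [div_eq_div_iff hd1ne (by intro h0; apply hd1ne; linarith)]
          ring
        · refine ⟨(S i (x, f x)).1, (S i (y, f y)).1, hQ1m.1, hQ2m.1, hlt, ?_⟩
          rw [← hQ1m.2, ← hQ2m.2, ← hval]
      exact sigma_eq_zero (slopeSet a b f) ⟨_, slopeSet_nonempty a b hab f⟩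
        (slopeSet_preconnected a b f hf) (Real.cos (θ i)) (Real.sin (θ i))
        (fun s hs => (key s hs).1) (fun s hs => (key s hs).2)
    -- step 2 : the induced affine maps on [a,b]
    have hcos1 : ∀ i, Real.cos (θ i) = 1 ∨ Real.cos (θ i) = -1 := by
      intro i
      have h := Real.sin_sq_add_cos_sq (θ i)
      rw [hsin i] at h
      have h2 : (Real.cos (θ i) - 1) * (Real.cos (θ i) + 1) = 0 := by linear_combination h
      rcases mul_eq_zero.1 h2 with h3 | h3
      · left; linarith
      · right; linarith
    have hSgraph : ∀ i (x : ℝ), S i (x, f x)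
        = (r i * Real.cos (θ i) * x + (bv i).1, r i * Real.cos (θ i) * f x + (bv i).2) := by
      intro i x
      have e1 := hc1 i (x, f x)
      have e2 := hc2 i (x, f x)
      simp only [] at e1 e2
      rw [hsin i] at e1 e2
      have : S i (x, f x) = ((S i (x, f x)).1, (S i (x, f x)).2) := rfl
      rw [this, e1, e2, Prod.mk.injEq]
      constructor <;> ring
    have hρ0 : ∀ i, r i * Real.cos (θ i) ≠ 0 := by
      intro i
      have h1 : Real.cos (θ i) ≠ 0 := by
        rcases hcos1 i with h | h <;> rw [h] <;> norm_num
      exact mul_ne_zero (ne_of_gt (hr i).1) h1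
    have hρ1 : ∀ i, |r i * Real.cos (θ i)| < 1 := by
      intro i
      rw [abs_mul, abs_of_pos (hr i).1]
      have : |Real.cos (θ i)| = 1 := by
        rcases hcos1 i with h | h <;> rw [h] <;> norm_num
      rw [this, mul_one]
      exact (hr i).2
    have hmaps : ∀ i, ∀ x ∈ Set.Icc a b,
        r i * Real.cos (θ i) * x + (bv i).1 ∈ Set.Icc a b := by
      intro i x hx
      have hQ : S i (x, f x) ∈ G := hsub i ⟨_, (hGmem x (f x)).2 ⟨hx, rfl⟩, rfl⟩
      rw [hSgraph i x] at hQ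
      exact ((hGmem _ _).1 hQ).1
    have hfeq : ∀ i, ∀ x ∈ Set.Icc a b,
        f (r i * Real.cos (θ i) * x + (bv i).1) = r i * Real.cos (θ i) * f x + (bv i).2 := by
      intro i x hx
      have hQ : S i (x, f x) ∈ G := hsub i ⟨_, (hGmem x (f x)).2 ⟨hx, rfl⟩, rfl⟩
      rw [hSgraph i x] at hQ
      exact (((hGmem _ _).1 hQ).2).symm
    have hcover : ∀ x ∈ Set.Icc a b, ∃ i, ∃ u ∈ Set.Icc a b,
        r i * Real.cos (θ i) * u + (bv i).1 = x := by
      intro x hx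
      have hmem : ((x, f x) : ℝ × ℝ) ∈ ⋃ i, S i '' G := by
        rw [← hun]
        exact (hGmem x (f x)).2 ⟨hx, rfl⟩
      obtain ⟨i, v, hvG, hSv⟩ := Set.mem_iUnion.1 hmem
      have hv : v = (v.1, v.2) := rfl
      rw [hv] at hvG
      have hvm := (hGmem v.1 v.2).1 hvG
      refine ⟨i, v.1, hvm.1, ?_⟩
      have : S i (v.1, f v.1) = (x, f x) := by
        rw [← hvm.2, ← hv, hSv]
      rw [hSgraph i v.1, Prod.mk.injEq] at this
      exact this.1
    have hlin := linear_of_selfmaps a b hab f hf k hk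
      (fun i => r i * Real.cos (θ i)) (fun i => (bv i).1) (fun i => (bv i).2)
      hρ0 hρ1 hmaps hfeq hcover
    -- conclude : G is the segment
    have hsmul : ∀ (c : ℝ) (p : ℝ × ℝ), c • p = (c * p.1, c * p.2) := fun c p => rfl
    have haddp : ∀ (p q : ℝ × ℝ), p + q = (p.1 + q.1, p.2 + q.2) := fun p q => rfl
    rw [hG, segment_eq_image ℝ]
    apply Set.eq_of_subset_of_subset
    · rintro z ⟨x, hx, rfl⟩
      refine ⟨(x - a) / (b - a), ⟨div_nonneg (by linarith [hx.1]) hba.le, ?_⟩, ?_⟩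
      · rw [div_le_one hba]
        linarith [hx.2]
      · have hfx := hlin x hx
        simp only [Prod.smul_mk, Prod.mk_add_mk, smul_eq_mul, Prod.mk.injEq]
        constructor
        · field_simp
          ring
        · rw [hfx]
          field_simp
          ring
    · rintro z ⟨t, ht, rfl⟩
      have hx : (1 - t) * a + t * b ∈ Set.Icc a b := by
        constructor <;> nlinarith [ht.1, ht.2]
      refine ⟨(1 - t) * a + t * b, hx, ?_⟩
      have hfx := hlin _ hx
      simp only [Prod.smul_mk, Prod.mk_add_mk, smul_eq_mul, Prod.mk.injEq]
      constructor
      · trivial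
      · rw [hfx]
        field_simp
        ring
  · -- easy direction
    intro hseg
    have hsmul : ∀ (c : ℝ) (p : ℝ × ℝ), c • p = (c * p.1, c * p.2) := fun c p => rfl
    have haddp : ∀ (p q : ℝ × ℝ), p + q = (p.1 + q.1, p.2 + q.2) := fun p q => rfl
    have hrot0 : ∀ v : ℝ × ℝ, rot 0 v = v := by
      intro v
      unfold rot
      simp
    refine ⟨hGcomp, 2,
      ![fun v => (1/2 : ℝ) • v + (1/2 : ℝ) • ((a, f a) : ℝ × ℝ),
        fun v => (1/2 : ℝ) • v + (1/2 : ℝ) • ((b, f b) : ℝ × ℝ)], by norm_num, ?_, ?_⟩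
    · intro i
      fin_cases i
      · show IsSimilitude (fun v => (1/2 : ℝ) • v + (1/2 : ℝ) • ((a, f a) : ℝ × ℝ))
        refine ⟨1/2, 0, (1/2 : ℝ) • ((a, f a) : ℝ × ℝ), ⟨by norm_num, by norm_num⟩, ?_⟩
        intro v
        rw [hrot0 v]
      · show IsSimilitude (fun v => (1/2 : ℝ) • v + (1/2 : ℝ) • ((b, f b) : ℝ × ℝ))
        refine ⟨1/2, 0, (1/2 : ℝ) • ((b, f b) : ℝ × ℝ), ⟨by norm_num, by norm_num⟩, ?_⟩
        intro v
        rw [hrot0 v]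
    · apply Set.eq_of_subset_of_subset
      · intro z hz
        rw [hseg, segment_eq_image ℝ] at hz
        obtain ⟨t, ht, rfl⟩ := hz
        simp only [Set.mem_iUnion]
        rcases le_total t (1/2) with h | h
        · refine ⟨0, (1 - 2*t) • ((a, f a) : ℝ × ℝ) + (2*t) • ((b, f b) : ℝ × ℝ), ?_, ?_⟩
          · rw [hseg, segment_eq_image ℝ]
            exact ⟨2*t, ⟨by linarith [ht.1], by linarith⟩, rfl⟩
          · show (1/2 : ℝ) • ((1 - 2*t) • ((a, f a) : ℝ × ℝ) + (2*t) • ((b, f b) : ℝ × ℝ))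
                + (1/2 : ℝ) • ((a, f a) : ℝ × ℝ)
                = (1 - t) • ((a, f a) : ℝ × ℝ) + t • ((b, f b) : ℝ × ℝ)
            simp only [Prod.smul_mk, Prod.mk_add_mk, smul_eq_mul, Prod.mk.injEq]
            constructor <;> ring
        · refine ⟨1, (2 - 2*t) • ((a, f a) : ℝ × ℝ) + (2*t - 1) • ((b, f b) : ℝ × ℝ), ?_, ?_⟩
          · rw [hseg, segment_eq_image ℝ]
            refine ⟨2*t - 1, ⟨by linarith, by linarith [ht.2]⟩, ?_⟩
            simp only [Prod.smul_mk, Prod.mk_add_mk, smul_eq_mul, Prod.mk.injEq]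
            constructor <;> ring
          · show (1/2 : ℝ) • ((2 - 2*t) • ((a, f a) : ℝ × ℝ) + (2*t - 1) • ((b, f b) : ℝ × ℝ))
                + (1/2 : ℝ) • ((b, f b) : ℝ × ℝ)
                = (1 - t) • ((a, f a) : ℝ × ℝ) + t • ((b, f b) : ℝ × ℝ)
            simp only [Prod.smul_mk, Prod.mk_add_mk, smul_eq_mul, Prod.mk.injEq]
            constructor <;> ring
      · intro z hz
        simp only [Set.mem_iUnion] at hz
        obtain ⟨i, w, hw, rfl⟩ := hz
        rw [hseg, segment_eq_image ℝ] at hw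
        obtain ⟨t, ht, rfl⟩ := hw
        rw [hseg, segment_eq_image ℝ]
        fin_cases i
        · refine ⟨t/2, ⟨by linarith [ht.1], by linarith [ht.2]⟩, ?_⟩
          show (1 - t/2) • ((a, f a) : ℝ × ℝ) + (t/2) • ((b, f b) : ℝ × ℝ)
              = (1/2 : ℝ) • ((1 - t) • ((a, f a) : ℝ × ℝ) + t • ((b, f b) : ℝ × ℝ))
                + (1/2 : ℝ) • ((a, f a) : ℝ × ℝ)
          simp only [Prod.smul_mk, Prod.mk_add_mk, smul_eq_mul, Prod.mk.injEq]
          constructor <;> ring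
        · refine ⟨(1 + t)/2, ⟨by linarith [ht.1], by linarith [ht.2]⟩, ?_⟩
          show (1 - (1 + t)/2) • ((a, f a) : ℝ × ℝ) + ((1 + t)/2) • ((b, f b) : ℝ × ℝ)
              = (1/2 : ℝ) • ((1 - t) • ((a, f a) : ℝ × ℝ) + t • ((b, f b) : ℝ × ℝ))
                + (1/2 : ℝ) • ((b, f b) : ℝ × ℝ)
          simp only [Prod.smul_mk, Prod.mk_add_mk, smul_eq_mul, Prod.mk.injEq]
          constructor <;> ring
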